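/- For the seasonally ice-free periodic solution, the Floquet multiplier is μ = e^{−B(t_f − t_m)} · (ζ/(ζ − E_b*)) · (F₋(t_f)/F₊(t_f)) · (F₊(t_m)/F₋(t_m)), obtained by implicit differentiation of the three-phase matching conditions E_b = −∫_{t_b}^{t_m}F₋, 0 = ∫_{t_m}^{t_f}e^{Bt}F₊(t)dt, E(t_b+1) − E(t_b+1)²/(2ζ) = ∫_{t_f}^{t_b+1}F₋, with respect to E_b at the fixed point E_b = E(t_b+1) = E_b*. -/

import Mathlib

lemma int_deriv {f : ℝ → ℝ} (hf : Continuous f) (a b : ℝ) :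
    HasDerivAt (fun u => ∫ τ in a..u, f τ) (f b) b :=
  intervalIntegral.integral_hasDerivAt_right (hf.intervalIntegrable _ _)
    (hf.stronglyMeasurableAtFilter _ _) hf.continuousAt

theorem seasonal_floquet (B ζ tb x₀ dtm dtf dP : ℝ) (hB : 0 < B) (hζ : 0 < ζ)
    (Fp Fm Fp' Fm' : ℝ → ℝ)
    (hFp : ∀ τ, HasDerivAt Fp (Fp' τ) τ) (hFm : ∀ τ, HasDerivAt Fm (Fm' τ) τ)
    (hFp' : Continuous Fp') (hFm' : Continuous Fm')
    (hFpper : ∀ τ, Fp (τ + 1) = Fp τ) (hFmper : ∀ τ, Fm (τ + 1) = Fm τ)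
    (tm tf P : ℝ → ℝ)
    (htm : HasDerivAt tm dtm x₀) (htf : HasDerivAt tf dtf x₀)
    (hP : HasDerivAt P dP x₀)
    (hmatch1 : ∀ x, x = -∫ τ in tb..(tm x), Fm τ)
    (hmatch2 : ∀ x, (∫ τ in (tm x)..(tf x), Real.exp (B * τ) * Fp τ) = 0)
    (hmatch3 : ∀ x, P x - (P x) ^ 2 / (2 * ζ) = ∫ τ in (tf x)..(tb + 1), Fm τ)
    (horder : tb < tm x₀ ∧ tm x₀ < tf x₀ ∧ tf x₀ < tb + 1)
    (hFmtm : Fm (tm x₀) ≠ 0) (hFptf : Fp (tf x₀) ≠ 0)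
    (hfix : P x₀ = x₀) (hneg : x₀ < 0) (hx₀ζ : x₀ ≠ ζ) :
    dP = Real.exp (-B * (tf x₀ - tm x₀)) * (ζ / (ζ - x₀)) *
      (Fm (tf x₀) / Fp (tf x₀)) * (Fp (tm x₀) / Fm (tm x₀)) := by
  have hFmc : Continuous Fm := continuous_iff_continuousAt.2 fun τ => (hFm τ).continuousAt
  have hFpc : Continuous Fp := continuous_iff_continuousAt.2 fun τ => (hFp τ).continuousAt
  set g : ℝ → ℝ := fun τ => Real.exp (B * τ) * Fp τ with hg
  have hgc : Continuous g := ((Real.continuous_exp.comp (continuous_const.mul continuous_id)).mul hFpc)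
  -- equation 1 : 1 = -(Fm (tm x₀) * dtm)
  have h1 : HasDerivAt (fun x => -∫ τ in tb..tm x, Fm τ) (-(Fm (tm x₀) * dtm)) x₀ :=
    (((int_deriv hFmc tb (tm x₀)).comp x₀ htm)).neg
  have e1 : (1 : ℝ) = -(Fm (tm x₀) * dtm) := by
    have := h1.congr_of_eventuallyEq (Filter.Eventually.of_forall hmatch1)
    exact (hasDerivAt_id x₀).unique this
  -- equation 2 : g (tf x₀) * dtf - g (tm x₀) * dtm = 0
  have hint : ∀ x, (∫ τ in (tm x)..(tf x), g τ)
      = (∫ τ in tb..(tf x), g τ) - ∫ τ in tb..(tm x), g τ := by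
    intro x
    rw [intervalIntegral.integral_interval_sub_left (hgc.intervalIntegrable _ _)
      (hgc.intervalIntegrable _ _)]
  have h2 : HasDerivAt (fun x => (∫ τ in tb..(tf x), g τ) - ∫ τ in tb..(tm x), g τ)
      (g (tf x₀) * dtf - g (tm x₀) * dtm) x₀ :=
    (((int_deriv hgc tb (tf x₀)).comp x₀ htf)).sub (((int_deriv hgc tb (tm x₀)).comp x₀ htm))
  have e2 : g (tf x₀) * dtf - g (tm x₀) * dtm = 0 := by
    have hz : HasDerivAt (fun _ : ℝ => (0:ℝ)) (g (tf x₀) * dtf - g (tm x₀) * dtm) x₀ := by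
      exact h2.congr_of_eventuallyEq (Filter.Eventually.of_forall fun x =>
        ((hint x).symm.trans (hmatch2 x)).symm)
    exact (hz.unique (hasDerivAt_const x₀ 0)).symm ▸ rfl
  -- equation 3 : dP - P x₀ * dP / ζ = -(Fm (tf x₀) * dtf)
  have h3l : HasDerivAt (fun x => P x - (P x)^2 / (2*ζ))
      (dP - 2 * P x₀ * dP / (2*ζ)) x₀ := by
    have := hP.sub (((hP.pow 2).div_const (2*ζ)))
    exact this.congr_deriv (by norm_num)
  have h3r : HasDerivAt (fun x => (∫ τ in tb..(tb+1), Fm τ) - ∫ τ in tb..(tf x), Fm τ)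
      (-(Fm (tf x₀) * dtf)) x₀ := by
    have h := (hasDerivAt_const x₀ (∫ τ in tb..(tb+1), Fm τ)).sub
      (((int_deriv hFmc tb (tf x₀)).comp x₀ htf))
    rw [zero_sub] at h
    exact h
  have hint3 : ∀ x, (∫ τ in (tf x)..(tb+1), Fm τ)
      = (∫ τ in tb..(tb+1), Fm τ) - ∫ τ in tb..(tf x), Fm τ := by
    intro x
    rw [intervalIntegral.integral_interval_sub_left (hFmc.intervalIntegrable _ _)
      (hFmc.intervalIntegrable _ _)]
  have e3 : dP - 2 * P x₀ * dP / (2*ζ) = -(Fm (tf x₀) * dtf) := by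
    exact h3l.unique (h3r.congr_of_eventuallyEq (Filter.Eventually.of_forall fun x =>
      (hmatch3 x).trans (hint3 x)))
  rw [hfix] at e3
  -- solve
  have hζ' : ζ ≠ 0 := ne_of_gt hζ
  have hζx : ζ - x₀ ≠ 0 := sub_ne_zero.2 (fun h => hx₀ζ h.symm)
  have hdtm : dtm = -1 / Fm (tm x₀) := by field_simp at e1 ⊢; linarith
  have hexp : Real.exp (B * tf x₀) ≠ 0 := Real.exp_ne_zero _
  have hdtf : dtf = Real.exp (B * tm x₀) * Fp (tm x₀) * dtm / (Real.exp (B * tf x₀) * Fp (tf x₀)) := by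
    simp only [hg] at e2
    field_simp at e2 ⊢
    linarith
  have hdP : dP = -(Fm (tf x₀) * dtf) * ζ / (ζ - x₀) := by
    field_simp at e3 ⊢
    ring_nf at e3 ⊢
    linarith
  rw [hdP, hdtf, hdtm]
  rw [show (-B * (tf x₀ - tm x₀)) = B * tm x₀ - B * tf x₀ by ring, Real.exp_sub]
  field_simp
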